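/- For K = 2 with Π = diag(π₁, π₂), π₁ + π₂ = 1, π_k > 0, and overlap matrix O satisfying Oπ = 𝟙 with off-diagonal entry O₁₂ ∈ (0, 1], the MBAR asymptotic variance of F₂ − F₁, namely (e₂ − e₁)ᵀ((Π − ΠOΠ)⁺ − Π^{−1})(e₂ − e₁), equals (1/(π₁π₂))·(O₁₂^{−1} − 1). -/

import Mathlib

open Finset Matrix

theorem bar_variance_two_states
    (π : Fin 2 → ℝ) (hπsum : ∑ k, π k = 1) (hπ : ∀ k, 0 < π k)
    (O : Matrix (Fin 2) (Fin 2) ℝ) (hOsymm : O.IsSymm)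
    (hOnorm : O.mulVec π = fun _ => 1)
    (hO12 : O 0 1 ∈ Set.Ioc (0 : ℝ) 1)
    (Aplus : Matrix (Fin 2) (Fin 2) ℝ)
    (hMP1 : (Matrix.diagonal π - Matrix.diagonal π * O * Matrix.diagonal π) * Aplus *
      (Matrix.diagonal π - Matrix.diagonal π * O * Matrix.diagonal π) =
      Matrix.diagonal π - Matrix.diagonal π * O * Matrix.diagonal π)
    (hMP2 : Aplus * (Matrix.diagonal π - Matrix.diagonal π * O * Matrix.diagonal π) * Aplus =
      Aplus)
    (hMP3 : ((Matrix.diagonal π - Matrix.diagonal π * O * Matrix.diagonal π) * Aplus)ᵀ =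
      (Matrix.diagonal π - Matrix.diagonal π * O * Matrix.diagonal π) * Aplus)
    (hMP4 : (Aplus * (Matrix.diagonal π - Matrix.diagonal π * O * Matrix.diagonal π))ᵀ =
      Aplus * (Matrix.diagonal π - Matrix.diagonal π * O * Matrix.diagonal π)) :
    (Pi.single 1 1 - Pi.single 0 1) ⬝ᵥ
      ((Aplus - (Matrix.diagonal π)⁻¹).mulVec (Pi.single 1 1 - Pi.single 0 1)) =
    (1 / (π 0 * π 1)) * ((O 0 1)⁻¹ - 1) := by
  have hπ0 := (hπ 0).ne'
  have hπ1 := (hπ 1).ne'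
  have hsum : π 0 + π 1 = 1 := by simpa [Fin.sum_univ_two] using hπsum
  have hO10 : O 1 0 = O 0 1 := by
    have := congrFun (congrFun hOsymm 1) 0
    simpa [Matrix.transpose_apply] using this.symm
  have h0 : O 0 0 * π 0 + O 0 1 * π 1 = 1 := by
    have := congrFun hOnorm 0
    simpa [Matrix.mulVec, dotProduct, Fin.sum_univ_two] using this
  have hO12pos := hO12.1
  have hO12ne : O 0 1 ≠ 0 := ne_of_gt hO12pos
  have h00 := congrFun (congrFun hMP1 0) 0
  simp only [Matrix.mul_apply, Matrix.sub_apply, Matrix.diagonal_apply, Fin.sum_univ_two,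
    Fin.isValue, hO10] at h00
  norm_num at h00
  have key : π 0 - π 0 * O 0 0 * π 0 = π 0 * O 0 1 * π 1 := by linear_combination -π 0 * h0
  rw [key] at h00
  have hs : π 0 * π 1 * O 0 1 ≠ 0 := by positivity
  have key2 : Aplus 0 0 + Aplus 1 1 - Aplus 0 1 - Aplus 1 0 = (π 0 * π 1 * O 0 1)⁻¹ := by
    have h2 : (π 0 * π 1 * O 0 1)^2 * (Aplus 0 0 + Aplus 1 1 - Aplus 0 1 - Aplus 1 0)
        = π 0 * π 1 * O 0 1 := by linear_combination h00
    have h3 : (π 0 * π 1 * O 0 1)^2 * (π 0 * π 1 * O 0 1)⁻¹ = π 0 * π 1 * O 0 1 := by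
      field_simp
    exact mul_left_cancel₀ (pow_ne_zero 2 hs) (h2.trans h3.symm)
  have hinv : (Matrix.diagonal π)⁻¹ = Matrix.diagonal fun i => (π i)⁻¹ := by
    apply Matrix.inv_eq_right_inv
    rw [Matrix.diagonal_mul_diagonal]
    convert Matrix.diagonal_one using 2
    funext i
    exact mul_inv_cancel₀ (hπ i).ne'
  have key2' : (Aplus 0 0 + Aplus 1 1 - Aplus 0 1 - Aplus 1 0) * (π 0 * π 1 * O 0 1) = 1 := by
    rw [key2]; field_simp
  rw [hinv]
  simp only [Matrix.mulVec, dotProduct, Matrix.sub_apply, Matrix.diagonal_apply,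
    Fin.sum_univ_two, Pi.sub_apply, Pi.single_apply, Fin.isValue]
  norm_num
  have : Aplus 0 0 + Aplus 1 1 - Aplus 0 1 - Aplus 1 0 - ((π 0)⁻¹ + (π 1)⁻¹) =
      (π 1)⁻¹ * (π 0)⁻¹ * ((O 0 1)⁻¹ - 1) := by
    rw [key2]
    field_simp
    linear_combination (-O 0 1) * hsum
  linarith [this]
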